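/- Let (Ω, μ) be a probability space and let A : Ω → B(L²(S¹)) be a random linear operator with matrix coefficients a_{ij}(ω) = ⟨A(ω) e_j, e_i⟩ for i, j ∈ ℤ. Then A is a random Laurent operator — i.e., there exists a product-measurable φ : Ω × S¹ → ℂ with each φ_ω := φ(ω, ·) essentially bounded such that A(ω) f = φ_ω f for all f ∈ L²(S¹) and ω ∈ Ω — if and only if a_{i+1, j+1}(ω) = a_{ij}(ω) for all i, j ∈ ℤ and all ω ∈ Ω. -/

import Mathlib

open MeasureTheory AddCircle

instance : Fact (0 < 2 * Real.pi) := ⟨by positivity⟩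

local notation "S¹" => AddCircle (2 * Real.pi)
local notation "μS" =>
  (AddCircle.haarAddCircle : MeasureTheory.Measure (AddCircle (2 * Real.pi)))

namespace RLaux
open Filter

lemma dist_sq_partial {E : Type*} [NormedAddCommGroup E] [InnerProductSpace ℂ E] {ι : Type*}
    (x : E) {v : ι → E} (hv : Orthonormal ℂ v) (s : Finset ι) :
    ‖x - ∑ i ∈ s, (inner ℂ (v i) x : ℂ) • v i‖ ^ 2
      = ‖x‖ ^ 2 - ∑ i ∈ s, ‖(inner ℂ (v i) x : ℂ)‖ ^ 2 := by
  have h₂ :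
    (∑ i ∈ s, ∑ j ∈ s, (inner ℂ (v i) x : ℂ) * inner ℂ x (v j) * inner ℂ (v j) (v i))
      = (∑ k ∈ s, (inner ℂ (v k) x : ℂ) * inner ℂ x (v k)) := by
    classical exact hv.inner_left_right_finset
  have h₃ : ∀ z : ℂ, RCLike.re (z * (starRingEnd ℂ) z) = ‖z‖ ^ 2 := by
    intro z
    rw [RCLike.mul_conj]
    norm_cast
  rw [@norm_sub_sq ℂ, sub_add]
  simp only [@InnerProductSpace.norm_sq_eq_re_inner ℂ, inner_sum, sum_inner]
  simp only [inner_smul_right, two_mul, inner_smul_left, inner_conj_symm, ← mul_assoc, h₂,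
    add_sub_cancel_right, sub_right_inj]
  simp only [map_sum, ← inner_conj_symm x, ← h₃]
  simp only [RCLike.inner_apply]

noncomputable abbrev e (n : ℤ) : Lp ℂ 2 μS := fourierLp 2 n

lemma inner_eq_integral (f g : Lp ℂ 2 μS) :
    (inner ℂ f g : ℂ) = ∫ z, (starRingEnd ℂ) (f z) * g z ∂μS := by
  rw [MeasureTheory.L2.inner_def]
  simp only [RCLike.inner_apply]
  exact integral_congr_ae (Eventually.of_forall fun z => mul_comm _ _)

lemma conj_fourier_mul (m n : ℤ) (z : S¹) :
    (starRingEnd ℂ) (fourier (m - n) z) = (starRingEnd ℂ) (fourier m z) * fourier n z := by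
  rw [← fourier_neg, ← fourier_neg (n := m), show -(m - n) = -m + n by ring, fourier_add]

variable (T : Lp ℂ 2 μS →L[ℂ] Lp ℂ 2 μS)

lemma shift_all
    (hsh : ∀ i j : ℤ, (inner ℂ (T (e (j+1))) (e (i+1)) : ℂ) = inner ℂ (T (e j)) (e i)) :
    ∀ j i : ℤ, (inner ℂ (T (e j)) (e i) : ℂ) = inner ℂ (T (e 0)) (e (i - j)) := by
  intro j
  induction j using Int.induction_on with
  | zero => intro i; norm_num
  | succ j ih =>
    intro i
    have h1 := hsh (i - 1) j
    rw [show i - 1 + 1 = i by ring] at h1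
    rw [h1, ih (i - 1), show i - 1 - j = i - (j + 1) by ring]
  | pred j ih =>
    intro i
    have h1 := (hsh i (-j - 1)).symm
    rw [show (-j - 1 : ℤ) + 1 = -j by ring] at h1
    rw [h1, ih (i + 1), show i + 1 - -(j:ℤ) = i - (-(j:ℤ) - 1) by ring]

lemma memℒp_fourier_mul (n : ℤ) (g : S¹ → ℂ) (hg : MemLp g 2 μS) :
    MemLp (fun z => fourier n z * g z) 2 μS := by
  refine MemLp.of_le hg (((map_continuous (fourier n)).aestronglyMeasurable).mul
    hg.aestronglyMeasurable) (Eventually.of_forall fun z => ?_)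
  rw [norm_mul]
  have : ‖fourier n z‖ = 1 := Circle.norm_coe _
  rw [this, one_mul]

lemma T_e_ae
    (hsh : ∀ i j : ℤ, (inner ℂ (T (e (j+1))) (e (i+1)) : ℂ) = inner ℂ (T (e j)) (e i)) (n : ℤ) :
    (T (e n) : S¹ → ℂ) =ᵐ[μS] fun z => fourier n z * (T (e 0) : S¹ → ℂ) z := by
  have hgm : MemLp (fun z => fourier n z * (T (e 0) : S¹ → ℂ) z) 2 μS :=
    memℒp_fourier_mul n _ (Lp.memLp (T (e 0)))
  have key : T (e n) = hgm.toLp _ := by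
    apply fourierBasis.repr.injective
    apply lp.ext
    funext m
    rw [fourierBasis.repr_apply_apply, fourierBasis.repr_apply_apply, coe_fourierBasis]
    show (inner ℂ (e m) (T (e n)) : ℂ) = inner ℂ (e m) (hgm.toLp _)
    have lhs : (inner ℂ (e m) (T (e n)) : ℂ) = inner ℂ (e (m - n)) (T (e 0)) := by
      rw [← inner_conj_symm, shift_all T hsh n m, inner_conj_symm]
    rw [lhs, inner_eq_integral, inner_eq_integral]
    refine integral_congr_ae ?_
    filter_upwards [coeFn_fourierLp (T := 2 * Real.pi) 2 (m - n),
      coeFn_fourierLp (T := 2 * Real.pi) 2 m, hgm.coeFn_toLp] with z h1 h2 h3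
    rw [h1, h2, h3, conj_fourier_mul]
    ring
  rw [key]
  exact hgm.coeFn_toLp

lemma coeFn_finset_sum {ι : Type*} (s : Finset ι) (F : ι → Lp ℂ 2 μS) :
    ((∑ i ∈ s, F i : Lp ℂ 2 μS) : S¹ → ℂ) =ᵐ[μS] fun z => ∑ i ∈ s, (F i : S¹ → ℂ) z := by
  classical
  induction s using Finset.induction with
  | empty => simp only [Finset.sum_empty]; exact Lp.coeFn_zero (E := ℂ) (p := 2) (μ := μS)
  | @insert a s ha ih =>
    rw [Finset.sum_insert ha]
    filter_upwards [Lp.coeFn_add (F a) (∑ i ∈ s, F i), ih] with z h1 h2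
    simp only [h1, Pi.add_apply, h2, Finset.sum_insert ha]

noncomputable def icc (N : ℕ) : Finset ℤ := Finset.Icc (-(N:ℤ)) N

lemma icc_tendsto : Tendsto icc atTop atTop := by
  refine tendsto_atTop_finset_of_monotone (fun a b hab => ?_) (fun x => ⟨x.natAbs, ?_⟩)
  · exact Finset.Icc_subset_Icc (by exact_mod_cast neg_le_neg (Int.ofNat_le.2 hab))
      (by exact_mod_cast Int.ofNat_le.2 hab)
  · simp only [icc, Finset.mem_Icc]
    omega

lemma partial_tendsto (f : Lp ℂ 2 μS) :
    Tendsto (fun N => ∑ n ∈ icc N, fourierCoeff (f : S¹ → ℂ) n • e n) atTop (nhds f) :=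
  (hasSum_fourier_series_L2 f).comp icc_tendsto

lemma T_mul_ae
    (hsh : ∀ i j : ℤ, (inner ℂ (T (e (j+1))) (e (i+1)) : ℂ) = inner ℂ (T (e j)) (e i))
    (f : Lp ℂ 2 μS) :
    (T f : S¹ → ℂ) =ᵐ[μS] fun z => (T (e 0) : S¹ → ℂ) z * f z := by
  set g : S¹ → ℂ := (T (e 0) : S¹ → ℂ) with hg
  set c : ℤ → ℂ := fun n => fourierCoeff (f : S¹ → ℂ) n with hc
  set u : ℕ → Lp ℂ 2 μS := fun N => ∑ n ∈ icc N, c n • e n with hu_def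
  have hu : Tendsto u atTop (nhds f) := partial_tendsto f
  have hTu : Tendsto (fun N => T (u N)) atTop (nhds (T f)) :=
    (T.continuous.tendsto f).comp hu
  -- a.e. identity for all N at once
  have hkey : ∀ᵐ z ∂μS, ∀ N, (T (u N) : S¹ → ℂ) z = g z * (u N : S¹ → ℂ) z := by
    rw [ae_all_iff]
    intro N
    have hmapsum : T (u N) = ∑ n ∈ icc N, c n • T (e n) := by
      rw [hu_def, map_sum]
      simp only [_root_.map_smul]
    rw [hmapsum]
    have hTe : ∀ᵐ z ∂μS, ∀ n : ℤ, (T (e n) : S¹ → ℂ) z = fourier n z * g z :=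
      ae_all_iff.2 fun n => T_e_ae T hsh n
    have hsm1 : ∀ᵐ z ∂μS, ∀ n : ℤ, ((c n • T (e n) : Lp ℂ 2 μS) : S¹ → ℂ) z
        = c n • (T (e n) : S¹ → ℂ) z :=
      ae_all_iff.2 fun n => Lp.coeFn_smul (c n) (T (e n))
    have hsm2 : ∀ᵐ z ∂μS, ∀ n : ℤ, ((c n • e n : Lp ℂ 2 μS) : S¹ → ℂ) z
        = c n • (e n : S¹ → ℂ) z :=
      ae_all_iff.2 fun n => Lp.coeFn_smul (c n) (e n)
    have hfou : ∀ᵐ z ∂μS, ∀ n : ℤ, (e n : S¹ → ℂ) z = fourier n z :=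
      ae_all_iff.2 fun n => coeFn_fourierLp 2 n
    filter_upwards [coeFn_finset_sum (icc N) (fun n => c n • T (e n)),
      coeFn_finset_sum (icc N) (fun n => c n • e n), hTe, hsm1, hsm2, hfou]
      with z h1 h2 h3 h4 h5 h6
    rw [h1, h2, Finset.mul_sum]
    refine Finset.sum_congr rfl fun n _ => ?_
    rw [h4 n, h5 n, h3 n, h6 n]
    simp only [smul_eq_mul]
    ring
  have h1 : TendstoInMeasure μS (fun N => ((u N : S¹ → ℂ))) atTop (f : S¹ → ℂ) :=
    tendstoInMeasure_of_tendsto_Lp hu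
  obtain ⟨ns, hns_mono, hns⟩ := h1.exists_seq_tendsto_ae
  have h2 : TendstoInMeasure μS (fun k => ((T (u (ns k)) : S¹ → ℂ))) atTop (T f : S¹ → ℂ) :=
    tendstoInMeasure_of_tendsto_Lp (hTu.comp hns_mono.tendsto_atTop)
  obtain ⟨ms, hms_mono, hms⟩ := h2.exists_seq_tendsto_ae
  filter_upwards [hns, hms, hkey] with z hz1 hz2 hz3
  have hz1' : Tendsto (fun k => (u (ns (ms k)) : S¹ → ℂ) z) atTop (nhds ((f : S¹ → ℂ) z)) :=
    hz1.comp hms_mono.tendsto_atTop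
  have hz4 : Tendsto (fun k => g z * (u (ns (ms k)) : S¹ → ℂ) z) atTop
      (nhds (g z * (f : S¹ → ℂ) z)) := tendsto_const_nhds.mul hz1'
  have hz5 : Tendsto (fun k => (T (u (ns (ms k))) : S¹ → ℂ) z) atTop
      (nhds (g z * (f : S¹ → ℂ) z)) := by
    refine hz4.congr fun k => ?_
    rw [hz3]
  exact tendsto_nhds_unique hz2 hz5

lemma norm_sq_integral (f : Lp ℂ 2 μS) : ‖f‖^2 = ∫ z, ‖f z‖^2 ∂μS := by
  have H₃ := congr_arg RCLike.re (@L2.inner_def S¹ ℂ ℂ _ _ _ _ _ f f)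
  rw [← integral_re (L2.integrable_inner f f)] at H₃
  simpa only [← norm_sq_eq_re_inner] using H₃

lemma T_bound
    (hsh : ∀ i j : ℤ, (inner ℂ (T (e (j+1))) (e (i+1)) : ℂ) = inner ℂ (T (e j)) (e i)) :
    ∀ᵐ z ∂μS, ‖(T (e 0) : S¹ → ℂ) z‖ ≤ ‖T‖ := by
  set g : S¹ → ℂ := (T (e 0) : S¹ → ℂ) with hgdef
  have hgm : StronglyMeasurable g := Lp.stronglyMeasurable _
  have key : ∀ ε : ℝ, 0 < ε → μS {z | ‖T‖ + ε ≤ ‖g z‖} = 0 := by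
    intro ε hε
    set E := {z | ‖T‖ + ε ≤ ‖g z‖} with hE
    have hEm : MeasurableSet E := measurableSet_le measurable_const hgm.norm.measurable
    by_contra hne
    have hmE : 0 < (μS E).toReal := by
      refine ENNReal.toReal_pos hne (measure_ne_top _ _)
    set f : Lp ℂ 2 μS := (memLp_indicator_const 2 hEm (1:ℂ)
      (Or.inr (measure_ne_top _ _))).toLp _ with hf
    have hfc : (f : S¹ → ℂ) =ᵐ[μS] E.indicator (fun _ => (1:ℂ)) :=
      MemLp.coeFn_toLp _
    have hnf : ‖f‖^2 = (μS E).toReal := by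
      rw [norm_sq_integral]
      have : (fun z => ‖(f : S¹ → ℂ) z‖^2) =ᵐ[μS] E.indicator (fun _ => (1:ℝ)) := by
        filter_upwards [hfc] with z hz
        rw [hz]
        by_cases h : z ∈ E <;> simp [h, Set.indicator_of_mem, Set.indicator_of_notMem]
      rw [integral_congr_ae this, integral_indicator_const _ hEm]
      simp [measureReal_def]
    have hTf : (T f : S¹ → ℂ) =ᵐ[μS] fun z => g z * (f : S¹ → ℂ) z := T_mul_ae T hsh f
    have hint : Integrable (fun z => ‖(T f : S¹ → ℂ) z‖^2) μS := by
      have := (Lp.memLp (T f)).integrable_norm_rpow (by norm_num) (by norm_num)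
      simpa [ENNReal.toReal_ofNat, Real.rpow_natCast] using this
    have hlow : ∫ z, ‖(T f : S¹ → ℂ) z‖^2 ∂μS ≥ (‖T‖ + ε)^2 * (μS E).toReal := by
      have hle : E.indicator (fun _ => (‖T‖ + ε)^2) ≤ᵐ[μS] fun z => ‖(T f : S¹ → ℂ) z‖^2 := by
        filter_upwards [hTf, hfc] with z h1 h2
        by_cases h : z ∈ E
        · rw [Set.indicator_of_mem h, h1, h2, Set.indicator_of_mem h]
          rw [mul_one]
          have : ‖T‖ + ε ≤ ‖g z‖ := h
          nlinarith [norm_nonneg (g z), norm_nonneg T, hε.le]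
        · rw [Set.indicator_of_notMem h]
          positivity
      calc (‖T‖ + ε)^2 * (μS E).toReal = ∫ z, E.indicator (fun _ => (‖T‖ + ε)^2) z ∂μS := by
            rw [integral_indicator_const _ hEm, smul_eq_mul, mul_comm, measureReal_def]
        _ ≤ ∫ z, ‖(T f : S¹ → ℂ) z‖^2 ∂μS := integral_mono_ae
            ((integrable_indicator_iff hEm).2 (integrableOn_const (
              (measure_ne_top _ _)))) hint hle
    have hup : ∫ z, ‖(T f : S¹ → ℂ) z‖^2 ∂μS ≤ ‖T‖^2 * (μS E).toReal := by
      rw [← norm_sq_integral]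
      have h1 : ‖T f‖ ≤ ‖T‖ * ‖f‖ := T.le_opNorm f
      have h2 : ‖T f‖^2 ≤ (‖T‖ * ‖f‖)^2 := by
        have := norm_nonneg (T f)
        nlinarith [norm_nonneg (T f), norm_nonneg T, norm_nonneg f]
      calc ‖T f‖^2 ≤ ‖T‖^2 * ‖f‖^2 := by nlinarith
        _ = ‖T‖^2 * (μS E).toReal := by rw [hnf]
    have hfin : (‖T‖ + ε)^2 * (μS E).toReal ≤ ‖T‖^2 * (μS E).toReal := le_trans hlow hup
    have hgt : (‖T‖ + ε)^2 > ‖T‖^2 := by nlinarith [norm_nonneg T]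
    nlinarith [mul_pos (sub_pos.2 hgt) hmE]
  have h2 : ∀ k : ℕ, μS {z | ‖T‖ + 1/(k+1 : ℝ) ≤ ‖g z‖} = 0 := fun k =>
    key _ (by positivity)
  have h3 : ∀ᵐ z ∂μS, ∀ k : ℕ, ¬ (‖T‖ + 1/(k+1 : ℝ) ≤ ‖g z‖) := by
    rw [ae_all_iff]
    intro k
    rw [ae_iff]
    simpa only [not_not] using h2 k
  filter_upwards [h3] with z hz
  by_contra hcon
  push_neg at hcon
  obtain ⟨k, hk⟩ := exists_nat_one_div_lt (sub_pos.2 hcon)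
  exact hz k (by linarith [hk])

lemma tendsto_ae_of_eLpNorm (h : ℕ → S¹ → ℂ) (g0 : S¹ → ℂ)
    (hmeas : ∀ k, AEStronglyMeasurable (fun z => g0 z - h k z) μS)
    (hb : ∀ k, eLpNorm (fun z => g0 z - h k z) 2 μS ≤ ENNReal.ofReal ((1/2:ℝ)^k)) :
    ∀ᵐ z ∂μS, Tendsto (fun k => h k z) atTop (nhds (g0 z)) := by
  have hb1 : ∀ k, ∫⁻ z, ‖g0 z - h k z‖₊ ∂μS ≤ ENNReal.ofReal ((1/2:ℝ)^k) := by
    intro k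
    simp only [← enorm_eq_nnnorm]
    rw [← eLpNorm_one_eq_lintegral_enorm]
    exact le_trans (eLpNorm_le_eLpNorm_of_exponent_le (by norm_num) (hmeas k)) (hb k)
  have htsum : ∫⁻ z, ∑' k, (‖g0 z - h k z‖₊ : ENNReal) ∂μS ≠ ⊤ := by
    rw [lintegral_tsum (fun k => (hmeas k).aemeasurable.nnnorm.coe_nnreal_ennreal)]
    refine ne_top_of_le_ne_top ?_ (ENNReal.tsum_le_tsum hb1)
    have : ∀ k : ℕ, ENNReal.ofReal ((1/2:ℝ)^k) = (ENNReal.ofReal (1/2))^k := fun k =>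
      (ENNReal.ofReal_pow (by norm_num) k)
    simp_rw [this]
    rw [ENNReal.tsum_geometric, Ne, ENNReal.inv_eq_top, tsub_eq_zero_iff_le]
    exact not_le.2 (ENNReal.ofReal_lt_one.2 (by norm_num))
  have hae : ∀ᵐ z ∂μS, ∑' k, (‖g0 z - h k z‖₊ : ENNReal) < ⊤ :=
    ae_lt_top' (AEMeasurable.ennreal_tsum fun k => (hmeas k).aemeasurable.nnnorm.coe_nnreal_ennreal) htsum
  filter_upwards [hae] with z hz
  have hterm : Tendsto (fun k => (‖g0 z - h k z‖₊ : ENNReal)) atTop (nhds 0) :=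
    ENNReal.tendsto_atTop_zero_of_tsum_ne_top hz.ne
  have hreal : Tendsto (fun k => ‖g0 z - h k z‖) atTop (nhds 0) := by
    have := (ENNReal.tendsto_toReal (by simp)).comp hterm
    simpa [Function.comp_def, ENNReal.coe_toReal, ← enorm_eq_nnnorm, toReal_enorm] using this
  rw [tendsto_iff_dist_tendsto_zero]
  refine hreal.congr fun k => ?_
  rw [dist_eq_norm, ← norm_neg]
  ring_nf

lemma hasSum_inner_sq (x : Lp ℂ 2 μS) :
    HasSum (fun n : ℤ => ‖(inner ℂ (e n) x : ℂ)‖^2) (‖x‖^2) := by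
  have h := fourierBasis.hasSum_inner_mul_inner x x
  have h2 := h.mapL Complex.reCLM
  have hterm : ∀ n : ℤ, Complex.reCLM ((inner ℂ x (fourierBasis n) : ℂ) * inner ℂ (fourierBasis n) x)
      = ‖(inner ℂ (e n) x : ℂ)‖^2 := by
    intro n
    have hb : (fourierBasis : HilbertBasis ℤ ℂ (Lp ℂ 2 μS)) n = e n :=
      congrFun coe_fourierBasis n
    rw [hb, ← inner_conj_symm, RCLike.conj_mul]
    norm_cast
  have hval : Complex.reCLM (inner ℂ x x : ℂ) = ‖x‖^2 := by
    simp only [Complex.reCLM_apply]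
    rw [← RCLike.re_to_complex, ← @norm_sq_eq_re_inner ℂ]
  rw [← hval]
  exact h2.congr_fun fun n => (hterm n).symm

end RLaux

open RLaux Filter

set_option maxHeartbeats 1000000 in
/-- A random linear operator `A : Ω → B(L²(S¹))` is a random Laurent operator
(multiplication by a product-measurable `φ` with each `φ_ω` essentially bounded) if and only if
its matrix coefficients `a_{ij}(ω) = ⟨A(ω) e_j, e_i⟩` satisfy `a_{i+1,j+1} = a_{ij}` for all
`i, j ∈ ℤ` and all `ω`. -/
theorem random_laurent_iff_constant_diagonals
    {Ω : Type*} [MeasurableSpace Ω] (μ : Measure Ω) [IsProbabilityMeasure μ]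
    (A : Ω → (Lp ℂ 2 μS →L[ℂ] Lp ℂ 2 μS))
    (hA : ∀ f g : Lp ℂ 2 μS, Measurable fun ω => (inner ℂ (A ω f) g : ℂ)) :
    (∃ φ : Ω × S¹ → ℂ, Measurable φ ∧
      (∀ ω, ∃ C : ℝ, ∀ᵐ z ∂μS, ‖φ (ω, z)‖ ≤ C) ∧
      ∀ ω (f : Lp ℂ 2 μS), (A ω f : S¹ → ℂ) =ᵐ[μS] fun z => φ (ω, z) * f z) ↔
    (∀ (i j : ℤ) (ω : Ω),
      (inner ℂ (A ω (fourierLp 2 (j + 1))) (fourierLp 2 (i + 1)) : ℂ) =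
      (inner ℂ (A ω (fourierLp 2 j)) (fourierLp 2 i) : ℂ)) := by
  classical
  constructor
  · rintro ⟨φ, hm, hb, hmul⟩ i j ω
    have key : ∀ (n m : ℤ), (inner ℂ (A ω (fourierLp 2 n)) (fourierLp 2 m) : ℂ)
        = ∫ z, (starRingEnd ℂ) (φ (ω, z) * fourier n z) * fourier m z ∂μS := by
      intro n m
      rw [inner_eq_integral]
      refine integral_congr_ae ?_
      filter_upwards [hmul ω (fourierLp 2 n), coeFn_fourierLp (T := 2*Real.pi) 2 n,
        coeFn_fourierLp (T := 2*Real.pi) 2 m] with z h1 h2 h3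
      rw [h1, h2, h3]
    rw [key, key]
    refine integral_congr_ae (Filter.Eventually.of_forall fun z => ?_)
    beta_reduce
    have h1 : (fourier (j+1) z : ℂ) = fourier j z * fourier 1 z := fourier_add
    have h2 : (fourier (i+1) z : ℂ) = fourier i z * fourier 1 z := fourier_add
    rw [h1, h2]
    simp only [map_mul]
    have hu : (starRingEnd ℂ) (fourier 1 z) * fourier 1 z = 1 := by
      have h := conj_fourier_mul 1 1 z
      rw [show (1 - 1 : ℤ) = 0 by ring, fourier_zero, map_one] at h
      exact h.symm
    linear_combination ((starRingEnd ℂ) (φ (ω, z)) * (starRingEnd ℂ) (fourier j z)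
      * fourier i z) * hu
  · intro hsh
    have hshw : ∀ ω, ∀ i j : ℤ,
        (inner ℂ ((A ω) (e (j+1))) (e (i+1)) : ℂ) = inner ℂ ((A ω) (e j)) (e i) :=
      fun ω i j => hsh i j ω
    set c : ℤ → Ω → ℂ := fun n ω => (starRingEnd ℂ) (inner ℂ (A ω (e 0)) (e n)) with hcdef
    have hc : ∀ n, Measurable (c n) := fun n =>
      (RCLike.continuous_conj.measurable).comp (hA (e 0) (e n))
    have hc_inner : ∀ n ω, c n ω = (inner ℂ (e n) (A ω (e 0)) : ℂ) := by
      intro n ω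
      rw [hcdef]
      exact inner_conj_symm _ _
    have hP : ∀ ω, HasSum (fun n => ‖c n ω‖^2) (‖A ω (e 0)‖^2) := by
      intro ω
      refine (hasSum_inner_sq (A ω (e 0))).congr_fun fun n => ?_
      rw [hc_inner]
    have mnsqE : Measurable (fun ω => ∑' n : ℤ, ENNReal.ofReal (‖c n ω‖^2)) :=
      Measurable.ennreal_tsum fun n => ((hc n).norm.pow_const 2).ennreal_ofReal
    have hnsqE : ∀ ω, (∑' n : ℤ, ENNReal.ofReal (‖c n ω‖^2))
        = ENNReal.ofReal (‖A ω (e 0)‖^2) := by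
      intro ω
      rw [← ENNReal.ofReal_tsum_of_nonneg (fun n => sq_nonneg _) (hP ω).summable, (hP ω).tsum_eq]
    have mnsq : Measurable (fun ω => ‖A ω (e 0)‖^2) := by
      have heq : (fun ω => ‖A ω (e 0)‖^2)
          = fun ω => (∑' n : ℤ, ENNReal.ofReal (‖c n ω‖^2)).toReal := by
        funext ω
        rw [hnsqE, ENNReal.toReal_ofReal (sq_nonneg _)]
      rw [heq]
      exact ENNReal.measurable_toReal.comp mnsqE
    set d : ℕ → Ω → ℝ := fun N ω => ‖A ω (e 0)‖^2 - ∑ n ∈ icc N, ‖c n ω‖^2 with hddef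
    have md : ∀ N, Measurable (d N) :=
      fun N => mnsq.sub (Finset.measurable_sum _ fun n _ => (hc n).norm.pow_const 2)
    have hd_eq : ∀ N ω, d N ω = ‖A ω (e 0) - ∑ n ∈ icc N, c n ω • e n‖^2 := by
      intro N ω
      have h := dist_sq_partial (A ω (e 0)) orthonormal_fourier (icc N)
      simp only [← hc_inner] at h
      exact h.symm
    have hd0 : ∀ ω, Tendsto (fun N => d N ω) atTop (nhds 0) := by
      intro ω
      have h1 : Tendsto (fun N => ∑ n ∈ icc N, ‖c n ω‖^2) atTop (nhds (‖A ω (e 0)‖^2)) :=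
        (hP ω).comp icc_tendsto
      have h2 : Tendsto (fun N => ‖A ω (e 0)‖^2 - ∑ n ∈ icc N, ‖c n ω‖^2) atTop
          (nhds (‖A ω (e 0)‖^2 - ‖A ω (e 0)‖^2)) := Tendsto.sub tendsto_const_nhds h1
      simpa using h2
    have ex : ∀ k : ℕ, ∀ ω, ∃ N, d N ω ≤ (1/4 : ℝ)^k := by
      intro k ω
      have h1 := (hd0 ω).eventually_lt_const (show (0:ℝ) < (1/4)^k by positivity)
      exact h1.exists.imp fun N hN => hN.le
    have mNk : ∀ k, Measurable (fun ω => Nat.find (ex k ω)) := fun k =>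
      measurable_find (ex k) fun N => measurableSet_le (md N) measurable_const
    set Sf : ℕ → Ω → S¹ → ℂ := fun N ω z => ∑ n ∈ icc N, c n ω * fourier n z with hSdef
    have hS : ∀ N, Measurable (fun p : Ω × S¹ => Sf N p.1 p.2) := fun N =>
      Finset.measurable_sum _ fun n _ =>
        ((hc n).comp measurable_fst).mul
          ((map_continuous (fourier n)).measurable.comp measurable_snd)
    have ex2 : ∀ k : ℕ, ∀ p : Ω × S¹, ∃ N, d N p.1 ≤ (1/4 : ℝ)^k := fun k p => ex k p.1
    set φk : ℕ → Ω × S¹ → ℂ := fun k p => Sf (Nat.find (ex2 k p)) p.1 p.2 with hφkdef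
    have hφk : ∀ k, Measurable (φk k) := fun k =>
      Measurable.find hS
        (fun N => measurableSet_le ((md N).comp measurable_fst) measurable_const) (ex2 k)
    have hφk_dist : ∀ ω k,
        eLpNorm (fun z => (A ω (e 0) : S¹ → ℂ) z - φk k (ω, z)) 2 μS
          ≤ ENNReal.ofReal ((1/2 : ℝ)^k) := by
      intro ω k
      set N := Nat.find (ex k ω) with hNdef
      have hNz : ∀ z : S¹, φk k (ω, z) = Sf N ω z := fun z => rfl
      set P : Lp ℂ 2 μS := ∑ n ∈ icc N, c n ω • e n with hPdef
      have h1 : (fun z => (A ω (e 0) : S¹ → ℂ) z - φk k (ω, z))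
          =ᵐ[μS] ((A ω (e 0) - P : Lp ℂ 2 μS) : S¹ → ℂ) := by
        have hsm : ∀ᵐ z ∂μS, ∀ n : ℤ,
            ((c n ω • e n : Lp ℂ 2 μS) : S¹ → ℂ) z = c n ω • (e n : S¹ → ℂ) z :=
          ae_all_iff.2 fun n => Lp.coeFn_smul _ _
        have hf : ∀ᵐ z ∂μS, ∀ n : ℤ, (e n : S¹ → ℂ) z = fourier n z :=
          ae_all_iff.2 fun n => coeFn_fourierLp 2 n
        have h2 := Lp.coeFn_sub (A ω (e 0)) P
        have h3 := coeFn_finset_sum (icc N) (fun n => c n ω • e n)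
        filter_upwards [h2, h3, hsm, hf] with z hz2 hz3 hz4 hz5
        rw [hNz z, hz2]
        simp only [Pi.sub_apply]
        congr 1
        rw [hz3]
        refine Finset.sum_congr rfl fun n _ => ?_
        rw [hz4 n, hz5 n, smul_eq_mul]
      rw [eLpNorm_congr_ae h1]
      have h2 : eLpNorm ((A ω (e 0) - P : Lp ℂ 2 μS) : S¹ → ℂ) 2 μS
          = ENNReal.ofReal ‖A ω (e 0) - P‖ := by
        rw [Lp.norm_def, ENNReal.ofReal_toReal (Lp.eLpNorm_ne_top _)]
      rw [h2]
      refine ENNReal.ofReal_le_ofReal ?_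
      have h3 : ‖A ω (e 0) - P‖^2 ≤ ((1/2:ℝ)^k)^2 := by
        have h4 : ((1/2:ℝ)^k)^2 = (1/4)^k := by
          rw [← pow_mul, pow_mul']
          norm_num
        rw [← hd_eq, h4]
        exact Nat.find_spec (ex k ω)
      nlinarith [norm_nonneg (A ω (e 0) - P), pow_nonneg (by norm_num : (0:ℝ) ≤ 1/2) k]
    have hconv : ∀ ω, ∀ᵐ z ∂μS,
        Tendsto (fun k => φk k (ω, z)) atTop (nhds ((A ω (e 0) : S¹ → ℂ) z)) := by
      intro ω
      refine tendsto_ae_of_eLpNorm (fun k z => φk k (ω, z)) _ (fun k => ?_)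
        (fun k => hφk_dist ω k)
      have hNz : (fun z : S¹ => φk k (ω, z)) = fun z => Sf (Nat.find (ex k ω)) ω z := rfl
      refine ((Lp.stronglyMeasurable _).aestronglyMeasurable).sub ?_
      show AEStronglyMeasurable (fun z : S¹ => φk k (ω, z)) μS
      rw [hNz]
      exact (continuous_finset_sum _ fun n _ =>
        continuous_const.mul (map_continuous (fourier n))).aestronglyMeasurable
    set Cset : Set (Ω × S¹) := {p | ∃ L, Tendsto (fun k => φk k p) atTop (nhds L)} with hCdef
    have hCm : MeasurableSet Cset := measurableSet_exists_tendsto hφk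
    set φ : Ω × S¹ → ℂ := fun p => if hp : p ∈ Cset then hp.choose else 0 with hφdef
    have hψ : ∀ k, Measurable (Cset.piecewise (φk k) (fun _ => 0)) := fun k =>
      Measurable.piecewise hCm (hφk k) measurable_const
    have hφlim : ∀ p, Tendsto (fun k => Cset.piecewise (φk k) (fun _ => 0) p) atTop
        (nhds (φ p)) := by
      intro p
      by_cases hp : p ∈ Cset
      · have he : ∀ k, Cset.piecewise (φk k) (fun _ => 0) p = φk k p := fun k =>
          Set.piecewise_eq_of_mem _ _ _ hp
        simp only [he]
        have hv : φ p = hp.choose := by rw [hφdef]; exact dif_pos hp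
        rw [hv]
        exact hp.choose_spec
      · have he : ∀ k, Cset.piecewise (φk k) (fun _ => 0) p = 0 := fun k =>
          Set.piecewise_eq_of_notMem _ _ _ hp
        simp only [he]
        have hv : φ p = 0 := by rw [hφdef]; exact dif_neg hp
        rw [hv]
        exact tendsto_const_nhds
    have hφm : Measurable φ :=
      measurable_of_tendsto_metrizable' atTop hψ (tendsto_pi_nhds.2 hφlim)
    have hφg : ∀ ω, (fun z => φ (ω, z)) =ᵐ[μS] ((A ω (e 0) : S¹ → ℂ)) := by
      intro ω
      filter_upwards [hconv ω] with z hz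
      have hp : (ω, z) ∈ Cset := ⟨_, hz⟩
      have hv : φ (ω, z) = hp.choose := by rw [hφdef]; exact dif_pos hp
      rw [hv]
      exact tendsto_nhds_unique hp.choose_spec hz
    refine ⟨φ, hφm, fun ω => ⟨‖A ω‖, ?_⟩, fun ω f => ?_⟩
    · filter_upwards [hφg ω, T_bound (A ω) (hshw ω)] with z h1 h2
      rw [h1]; exact h2
    · filter_upwards [T_mul_ae (A ω) (hshw ω) f, hφg ω] with z h1 h2
      rw [h1, h2]
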